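/- Let n ≥ 1, let K : ℝⁿ → (n×n real symmetric matrices) be smooth, and let ξ : ℝⁿ → ℝⁿ, ω : ℝⁿ → ℝ be smooth with £_ξ K = −ω·K, where (£_ξK)^{αβ} = Σ_ρ (ξ^ρ ∂K^{αβ}/∂q^ρ − (∂ξ^α/∂q^ρ) K^{ρβ} − (∂ξ^β/∂q^ρ) K^{αρ}). Suppose q, π : I → ℝⁿ are smooth on an interval I and satisfy Hamilton's equations dq^α/dτ = Σ_β K^{αβ}(q) π_β and dπ_α/dτ = −(1/2) Σ_{κ,λ} (∂K^{κλ}/∂q^α)(q) π_κ π_λ. Then d/dτ [Σ_α ξ^α(q(τ)) π_α(τ)] = (1/2) ω(q(τ)) Σ_{κ,λ} K^{κλ}(q(τ)) π_κ(τ) π_λ(τ). In particular, if in addition the Hamiltonian constraint (1/2) Σ K^{κλ}(q) π_κ π_λ + 1 = 0 holds along the curve, then d/dτ [Σ_α ξ^α(q) π_α] = −ω(q(τ)). -/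

import Mathlib

open scoped BigOperators

private lemma clm_apply_eq_sum {n : ℕ} (L : (Fin n → ℝ) →L[ℝ] ℝ) (v : Fin n → ℝ) :
    L v = ∑ ρ : Fin n, v ρ * L (Pi.single ρ 1) := by
  have hv : v = ∑ ρ : Fin n, v ρ • (Pi.single ρ (1:ℝ) : Fin n → ℝ) := by
    funext j
    simp [Finset.sum_apply, Pi.single_apply, mul_comm]
  conv_lhs => rw [hv]
  simp [map_sum]

lemma key_algebra (n : ℕ) (Kq : Fin n → Fin n → ℝ) (dK : Fin n → Fin n → Fin n → ℝ)
    (xq : Fin n → ℝ) (A : Fin n → Fin n → ℝ) (w : ℝ) (P : Fin n → ℝ)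
    (hsym : ∀ α β, Kq α β = Kq β α)
    (hlie : ∀ α β, ∑ ρ : Fin n, (xq ρ * dK ρ α β - A ρ α * Kq ρ β - A ρ β * Kq α ρ)
      = -w * Kq α β) :
    ∑ α : Fin n, ((∑ ρ : Fin n, (∑ β : Fin n, Kq ρ β * P β) * A ρ α) * P α
        + xq α * (-(1/2) * ∑ κ : Fin n, ∑ l : Fin n, dK α κ l * P κ * P l))
      = (1/2) * w * ∑ κ : Fin n, ∑ l : Fin n, Kq κ l * P κ * P l := by
  have h3 : (∑ α : Fin n, ∑ β : Fin n, ∑ ρ : Fin n, A ρ β * Kq α ρ * (P α * P β))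
      = ∑ α : Fin n, ∑ β : Fin n, ∑ ρ : Fin n, A ρ α * Kq ρ β * (P α * P β) := by
    rw [Finset.sum_comm]
    exact Finset.sum_congr rfl fun β _ => Finset.sum_congr rfl fun α _ =>
      Finset.sum_congr rfl fun ρ _ => by rw [hsym α ρ]; ring
  have H : (∑ α : Fin n, ∑ β : Fin n, ∑ ρ : Fin n, xq ρ * dK ρ α β * (P α * P β))
      - (∑ α : Fin n, ∑ β : Fin n, ∑ ρ : Fin n, A ρ α * Kq ρ β * (P α * P β))
      - (∑ α : Fin n, ∑ β : Fin n, ∑ ρ : Fin n, A ρ α * Kq ρ β * (P α * P β))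
      = -w * ∑ κ : Fin n, ∑ l : Fin n, Kq κ l * P κ * P l := by
    nth_rewrite 2 [← h3]
    have expand : ∑ α : Fin n, ∑ β : Fin n,
        (∑ ρ : Fin n, (xq ρ * dK ρ α β - A ρ α * Kq ρ β - A ρ β * Kq α ρ)) * (P α * P β)
        = (∑ α : Fin n, ∑ β : Fin n, ∑ ρ : Fin n, xq ρ * dK ρ α β * (P α * P β))
          - (∑ α : Fin n, ∑ β : Fin n, ∑ ρ : Fin n, A ρ α * Kq ρ β * (P α * P β))
          - (∑ α : Fin n, ∑ β : Fin n, ∑ ρ : Fin n, A ρ β * Kq α ρ * (P α * P β)) := by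
      simp only [sub_mul, Finset.sum_mul, Finset.sum_sub_distrib]
    rw [← expand, Finset.mul_sum]
    refine Finset.sum_congr rfl fun α _ => ?_
    rw [Finset.mul_sum]
    exact Finset.sum_congr rfl fun β _ => by rw [hlie]; ring
  have e2 : ∑ α : Fin n, (∑ ρ : Fin n, (∑ β : Fin n, Kq ρ β * P β) * A ρ α) * P α
      = ∑ α : Fin n, ∑ β : Fin n, ∑ ρ : Fin n, A ρ α * Kq ρ β * (P α * P β) := by
    refine Finset.sum_congr rfl fun α _ => ?_
    rw [Finset.sum_comm, Finset.sum_mul]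
    refine Finset.sum_congr rfl fun β _ => ?_
    rw [Finset.sum_mul, Finset.sum_mul]
    exact Finset.sum_congr rfl fun ρ _ => by ring
  have e1 : ∑ α : Fin n, xq α * (-(1/2) * ∑ κ : Fin n, ∑ l : Fin n, dK α κ l * P κ * P l)
      = -(1/2) * ∑ α : Fin n, ∑ β : Fin n, ∑ ρ : Fin n, xq ρ * dK ρ α β * (P α * P β) := by
    have swap : ∑ α : Fin n, ∑ β : Fin n, ∑ ρ : Fin n, xq ρ * dK ρ α β * (P α * P β)
        = ∑ ρ : Fin n, ∑ α : Fin n, ∑ β : Fin n, xq ρ * dK ρ α β * (P α * P β) := by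
      rw [show (∑ α : Fin n, ∑ β : Fin n, ∑ ρ : Fin n, xq ρ * dK ρ α β * (P α * P β))
          = ∑ α : Fin n, ∑ ρ : Fin n, ∑ β : Fin n, xq ρ * dK ρ α β * (P α * P β) from
        Finset.sum_congr rfl fun α _ => Finset.sum_comm]
      exact Finset.sum_comm
    rw [swap, Finset.mul_sum]
    refine Finset.sum_congr rfl fun ρ _ => ?_
    have inner : ∑ α : Fin n, ∑ β : Fin n, xq ρ * dK ρ α β * (P α * P β)
        = xq ρ * ∑ α : Fin n, ∑ β : Fin n, dK ρ α β * P α * P β := by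
      rw [Finset.mul_sum]
      exact Finset.sum_congr rfl fun α _ => by
        rw [Finset.mul_sum]
        exact Finset.sum_congr rfl fun β _ => by ring
    rw [inner]; ring
  rw [Finset.sum_add_distrib, e1, e2]
  linarith

/-- Partial derivative `∂f/∂q^α` of a scalar function on `ℝⁿ`. -/
noncomputable def pd {n : ℕ} (f : (Fin n → ℝ) → ℝ) (α : Fin n) (q : Fin n → ℝ) : ℝ :=
  fderiv ℝ f q (Pi.single α 1)

/-- Lie derivative of a contravariant 2-tensor (inverse metric). -/
noncomputable def lieK {n : ℕ} (ξ : (Fin n → ℝ) → Fin n → ℝ)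
    (K : (Fin n → ℝ) → Fin n → Fin n → ℝ) (q : Fin n → ℝ) (α β : Fin n) : ℝ :=
  ∑ ρ : Fin n, (ξ q ρ * pd (fun p => K p α β) ρ q
      - pd (fun p => ξ p α) ρ q * K q ρ β
      - pd (fun p => ξ p β) ρ q * K q α ρ)

/-- along solutions of Hamilton's equations, if `£_ξ K = −ω·K` then
`d/dτ (Σ ξ^α π_α) = (1/2) ω Σ K^{κλ} π_κ π_λ`; with the constraint
`(1/2)ΣK^{κλ}π_κπ_λ + 1 = 0`, this equals `−ω`. -/
theorem charge_evolution_along_hamilton_flow (n : ℕ) (hn : 1 ≤ n)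
    (K : (Fin n → ℝ) → Fin n → Fin n → ℝ)
    (hKsmooth : ∀ α β, ContDiff ℝ (⊤ : ℕ∞) fun q => K q α β)
    (hKsymm : ∀ q α β, K q α β = K q β α)
    (ξ : (Fin n → ℝ) → Fin n → ℝ) (ω : (Fin n → ℝ) → ℝ)
    (hξsmooth : ContDiff ℝ (⊤ : ℕ∞) ξ)
    (hωsmooth : ContDiff ℝ (⊤ : ℕ∞) ω)
    (hlie : ∀ q α β, lieK ξ K q α β = -(ω q) * K q α β)
    (I : Set ℝ) (q π : ℝ → Fin n → ℝ) (qd πd : ℝ → Fin n → ℝ)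
    (hq : ∀ τ ∈ I, HasDerivAt q (qd τ) τ)
    (hπ : ∀ τ ∈ I, HasDerivAt π (πd τ) τ)
    -- Hamilton's equations
    (hham1 : ∀ τ ∈ I, ∀ α : Fin n, qd τ α = ∑ β : Fin n, K (q τ) α β * π τ β)
    (hham2 : ∀ τ ∈ I, ∀ α : Fin n,
      πd τ α = -(1 / 2) * ∑ κ : Fin n, ∑ lam : Fin n,
        pd (fun p => K p κ lam) α (q τ) * π τ κ * π τ lam) :
    (∀ τ ∈ I, HasDerivAt (fun s => ∑ α : Fin n, ξ (q s) α * π s α)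
        ((1 / 2) * ω (q τ) * ∑ κ : Fin n, ∑ lam : Fin n, K (q τ) κ lam * π τ κ * π τ lam) τ)
    ∧ ((∀ s ∈ I, (1 / 2) * (∑ κ : Fin n, ∑ lam : Fin n, K (q s) κ lam * π s κ * π s lam)
          + 1 = 0) →
        ∀ τ ∈ I, HasDerivAt (fun s => ∑ α : Fin n, ξ (q s) α * π s α) (-(ω (q τ))) τ) := by
  have part1 : ∀ τ ∈ I, HasDerivAt (fun s => ∑ α : Fin n, ξ (q s) α * π s α)
      ((1 / 2) * ω (q τ) * ∑ κ : Fin n, ∑ lam : Fin n, K (q τ) κ lam * π τ κ * π τ lam) τ := by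
    intro τ hτ
    have hsum : HasDerivAt (fun s => ∑ α : Fin n, ξ (q s) α * π s α)
        (∑ α : Fin n, (fderiv ℝ (fun p => ξ p α) (q τ) (qd τ) * π τ α
          + ξ (q τ) α * πd τ α)) τ := by
      refine HasDerivAt.fun_sum fun α _ => ?_
      have hξα : ContDiff ℝ (⊤ : ℕ∞) fun p => ξ p α := contDiff_pi.1 hξsmooth α
      have hfd : HasFDerivAt (fun p => ξ p α) (fderiv ℝ (fun p => ξ p α) (q τ)) (q τ) :=
        ((hξα.differentiable (by simp)) (q τ)).hasFDerivAt
      have hcomp : HasDerivAt (fun s => ξ (q s) α)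
          (fderiv ℝ (fun p => ξ p α) (q τ) (qd τ)) τ := hfd.comp_hasDerivAt τ (hq τ hτ)
      have hπα : HasDerivAt (fun s => π s α) (πd τ α) τ := hasDerivAt_pi.1 (hπ τ hτ) α
      exact hcomp.mul hπα
    convert hsum using 1
    have hfda : ∀ α : Fin n, fderiv ℝ (fun p => ξ p α) (q τ) (qd τ)
        = ∑ ρ : Fin n, (∑ β : Fin n, K (q τ) ρ β * π τ β)
            * pd (fun p => ξ p α) ρ (q τ) := by
      intro α
      rw [clm_apply_eq_sum]
      exact Finset.sum_congr rfl fun ρ _ => by rw [hham1 τ hτ ρ]; rfl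
    simp only [hfda, hham2 τ hτ]
    exact (key_algebra n (K (q τ)) (fun ρ κ l => pd (fun p => K p κ l) ρ (q τ))
      (ξ (q τ)) (fun ρ α => pd (fun p => ξ p α) ρ (q τ)) (ω (q τ)) (π τ)
      (hKsymm (q τ))
      (fun α β => by simpa [lieK] using hlie (q τ) α β)).symm
  refine ⟨part1, fun hcon τ hτ => ?_⟩
  have h1 := part1 τ hτ
  have hc := hcon τ hτ
  convert h1 using 1
  have hS : (∑ κ : Fin n, ∑ lam : Fin n, K (q τ) κ lam * π τ κ * π τ lam) = -2 := by
    linarith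
  rw [hS]; ring
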